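/- arXiv:1405.5722 — 3 statements merged into one kernel-verified Lean document; each statement's English description precedes it below -/
import Mathlib

section
/- With notation as above, if additionally M is a finitely generated free ℤG-module of rank n and N is projective, then dt·dim_{ℤ/q} Ker(1_{ℤ/q} ⊗_{ℤG} f) ≥ dim_{Q(H')} Ker(1_{Q(H')^{dt}} ⊗_{ℤG} f). -/
open CategoryTheory

set_option linter.unusedSectionVars false
section
variable {R : Type} [Ring R] {K : Type} [Field K]

noncomputable def pinj (m : ℕ) (i : Fin m) :
    ModuleCat.of R R ⟶ ModuleCat.of R (Fin m → R) :=
  ModuleCat.ofHom (LinearMap.single R (fun _ : Fin m => R) i)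

def pproj (m : ℕ) (i : Fin m) :
    ModuleCat.of R (Fin m → R) ⟶ ModuleCat.of R R :=
  ModuleCat.ofHom (LinearMap.proj i)

lemma pinj_pproj (m : ℕ) (i j : Fin m) :
    pinj (R := R) m i ≫ pproj m j = if i = j then 𝟙 _ else 0 := by
  apply ModuleCat.hom_ext; apply LinearMap.ext; intro x
  rcases eq_or_ne i j with h | h
  · subst h
    rw [if_pos rfl]
    exact Pi.single_eq_same (M := fun _ : Fin m => R) i x
  · rw [if_neg h]
    exact Pi.single_eq_of_ne (M := fun _ : Fin m => R) (Ne.symm h) x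

lemma sum_pproj_pinj (m : ℕ) :
    (∑ i : Fin m, pproj (R := R) m i ≫ pinj m i) = 𝟙 _ := by
  apply ModuleCat.hom_ext; apply LinearMap.ext; intro x
  rw [ModuleCat.hom_sum, LinearMap.sum_apply]
  show (∑ i : Fin m, Pi.single i (x i)) = x
  exact Finset.univ_sum_single x

variable (F : ModuleCat R ⥤ ModuleCat K) [F.Additive]

lemma map_comp_apply {X Y Z : ModuleCat R} (g : X ⟶ Y) (h : Y ⟶ Z) (x) :
    F.map (g ≫ h) x = F.map h (F.map g x) := by
  rw [F.map_comp]; rfl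

/-- decomposition of an element of `F (R^m)`. -/
lemma decomp (m : ℕ) (y : F.obj (ModuleCat.of R (Fin m → R))) :
    y = ∑ i : Fin m, F.map (pinj m i) (F.map (pproj m i) y) := by
  have h := congrArg F.map (sum_pproj_pinj (R := R) m)
  rw [F.map_sum, F.map_id] at h
  have h2 := DFunLike.congr_fun (congrArg ModuleCat.Hom.hom h) y
  rw [ModuleCat.hom_sum, LinearMap.sum_apply] at h2
  rw [show ModuleCat.Hom.hom (𝟙 (F.obj (ModuleCat.of R (Fin m → R)))) y = y from rfl] at h2
  conv_lhs => rw [← h2]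
  exact Finset.sum_congr rfl fun i _ => (map_comp_apply F _ _ y)

/-- `F (R^m) ≃ (F R)^m`. -/
noncomputable def decompEquiv (m : ℕ) :
    F.obj (ModuleCat.of R (Fin m → R)) ≃ₗ[K] (Fin m → F.obj (ModuleCat.of R R)) where
  toFun y i := F.map (pproj m i) y
  map_add' x y := by funext i; simp
  map_smul' c y := by funext i; simp
  invFun v := ∑ i : Fin m, F.map (pinj m i) (v i)
  left_inv y := (decomp F m y).symm
  right_inv v := by
    funext j
    simp only [map_sum]
    have key : ∀ i, F.map (pproj m j) (F.map (pinj m i) (v i))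
        = if i = j then v i else 0 := by
      intro i
      rw [← map_comp_apply F, pinj_pproj]
      split
      · rw [CategoryTheory.Functor.map_id]; rfl
      · rw [F.map_zero]; rfl
    rw [Finset.sum_congr rfl (fun i _ => key i)]
    simp

lemma rank_Fpow (m : ℕ) :
    Module.rank K (F.obj (ModuleCat.of R (Fin m → R)))
      = m * Module.rank K (F.obj (ModuleCat.of R R)) := by
  rw [(decompEquiv F m).rank_eq, rank_fun_eq_lift_mul]
  simp

/-- `F (R^m)` is spanned by the images of `u` under the injections,
if `u` spans `F R`. -/
lemma span_Fpow (m : ℕ) (u : F.obj (ModuleCat.of R R))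
    (hu : ∀ w : F.obj (ModuleCat.of R R), ∃ c : K, c • u = w) :
    Submodule.span K (Set.range (fun i : Fin m => F.map (pinj m i) u)) = ⊤ := by
  rw [Submodule.eq_top_iff']
  intro y
  rw [decomp F m y]
  apply Submodule.sum_mem
  intro i _
  obtain ⟨c, hc⟩ := hu (F.map (pproj m i) y)
  rw [← hc, map_smul]
  exact Submodule.smul_mem _ c (Submodule.subset_span ⟨i, rfl⟩)
end


/-- Same setup as Statement 0 (abstracting `ℤ/q ⊗_{ℤG} -` and
`Q(H')^{dt} ⊗_{ℤG} -` as functors `F`, `T`), with additionally `M = (ℤG)^n` finitely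
generated free and `N` projective. Then
`d·t · dim_{ℤ/q} Ker(F f) ≥ dim_{Q(H')} Ker(T f)`. -/
theorem dim_kernel_ge {G : Type} [Group G] (q : ℕ) [Fact (Nat.Prime q)]
    (QH : Type) [Field QH] (d t n : ℕ)
    (F : ModuleCat (MonoidAlgebra ℤ G) ⥤ ModuleCat (ZMod q))
    (T : ModuleCat (MonoidAlgebra ℤ G) ⥤ ModuleCat QH)
    [F.Additive] [T.Additive] [F.PreservesEpimorphisms] [T.PreservesEpimorphisms]
    (hF1 : Module.rank (ZMod q)
      (F.obj (ModuleCat.of (MonoidAlgebra ℤ G) (MonoidAlgebra ℤ G))) = 1)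
    (hTdt : Module.rank QH
      (T.obj (ModuleCat.of (MonoidAlgebra ℤ G) (MonoidAlgebra ℤ G))) = (d * t : ℕ))
    (hinj : ∀ (P P' : ModuleCat (MonoidAlgebra ℤ G)) (g : P ⟶ P'),
      Projective P → Projective P' →
      Function.Injective (F.map g) → Function.Injective (T.map g))
    (N : ModuleCat (MonoidAlgebra ℤ G)) (hN : Projective N)
    (f : ModuleCat.of (MonoidAlgebra ℤ G) (Fin n → MonoidAlgebra ℤ G) ⟶ N) :
    Module.rank QH (LinearMap.ker (T.map f).hom) ≤
      (d * t : Cardinal) * Module.rank (ZMod q) (LinearMap.ker (F.map f).hom) := by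
  set R := MonoidAlgebra ℤ G with hR
  haveI : Fact (1 < q) := ⟨(Fact.out : Nat.Prime q).one_lt⟩
  -- a spanning vector of F(R)
  obtain ⟨u, hu0, hu⟩ := rank_eq_one_iff.mp hF1
  -- the range of F.map f is spanned by v
  set v : Fin n → F.obj N := fun i => F.map (pinj n i ≫ f) u with hv
  have hrange : LinearMap.range (F.map f).hom = Submodule.span (ZMod q) (Set.range v) := by
    have h1 := span_Fpow F n u hu
    rw [LinearMap.range_eq_map, ← h1, Submodule.map_span, ← Set.range_comp]
    congr 1
    apply congrArg
    funext i
    show F.map f (F.map (pinj n i) u) = F.map (pinj n i ≫ f) u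
    rw [map_comp_apply]
  obtain ⟨b, hbsub, hbspan, hbli⟩ := exists_linearIndependent (ZMod q) (Set.range v)
  have hbfin : b.Finite := (Set.finite_range v).subset hbsub
  haveI : Fintype b := hbfin.fintype
  have e : Fin (Fintype.card b) ≃ b := (Fintype.equivFin ↥b).symm
  set k := Fintype.card b with hk
  -- choose preimages
  have hidx : ∀ x : b, ∃ i : Fin n, v i = x := fun x => hbsub x.2
  choose idx hidxspec using hidx
  set φ : Fin k → Fin n := fun j => idx (e j) with hφ
  set ι : ModuleCat.of R (Fin k → R) ⟶ ModuleCat.of R (Fin n → R) :=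
    ∑ j : Fin k, pproj k j ≫ pinj n (φ j) with hι
  have hcomp : ∀ j : Fin k, pinj k j ≫ ι = pinj n (φ j) := by
    intro j
    rw [hι, Preadditive.comp_sum]
    rw [Finset.sum_eq_single j]
    · rw [← Category.assoc, pinj_pproj, if_pos rfl, Category.id_comp]
    · intro j' _ hne
      rw [← Category.assoc, pinj_pproj, if_neg (Ne.symm hne), Limits.zero_comp]
    · intro h; exact absurd (Finset.mem_univ j) h
  have hbasis : ∀ j : Fin k, F.map (pinj k j ≫ (ι ≫ f)) u = (e j : F.obj N) := by
    intro j
    rw [← Category.assoc, hcomp]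
    exact hidxspec (e j)
  -- linear independence of the chosen family
  have hli : LinearIndependent (ZMod q) (fun j : Fin k => ((e j : b) : F.obj N)) :=
    hbli.comp (fun j => e j) (fun a a' h => e.injective (Subtype.ext_iff.mpr (by
      exact Subtype.ext_iff.mp h)))
  -- F.map (ι ≫ f) is injective
  have hFinj : Function.Injective (F.map (ι ≫ f)) := by
    rw [show (⇑(F.map (ι ≫ f)) : _ → _) = ⇑(F.map (ι ≫ f)).hom from rfl]
    rw [← LinearMap.ker_eq_bot, LinearMap.ker_eq_bot']
    intro y hy
    have hdec := decomp F k y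
    choose c hc using fun j : Fin k => hu (F.map (pproj k j) y)
    have hy2 : ∑ j : Fin k, c j • ((e j : b) : F.obj N) = 0 := by
      rw [← hy]
      conv_rhs => rw [hdec]
      rw [map_sum]
      apply Finset.sum_congr rfl
      intro j _
      rw [← hc j, map_smul, map_smul, ← map_comp_apply, ← hbasis j]
    have hc0 : ∀ j, c j = 0 := by
      have := Fintype.linearIndependent_iff.mp hli c hy2
      exact this
    rw [hdec]
    apply Finset.sum_eq_zero
    intro j _
    rw [← hc j, hc0 j, zero_smul, map_zero]
  -- project to T
  have hPk : Projective (ModuleCat.of R (Fin k → R)) :=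
    ModuleCat.projective_of_free (M := ModuleCat.of R (Fin k → R)) (Pi.basisFun R (Fin k))
  have hTinj : Function.Injective (T.map (ι ≫ f)) :=
    hinj _ _ (ι ≫ f) hPk hN hFinj
  -- rank computations
  have hrkF : Module.rank (ZMod q) (F.obj (ModuleCat.of R (Fin n → R))) = n := by
    rw [rank_Fpow, hF1, mul_one]
  have hrkT : Module.rank QH (T.obj (ModuleCat.of R (Fin n → R))) = ((n * (d * t) : ℕ) : Cardinal) := by
    rw [rank_Fpow, hTdt]; push_cast; ring
  have hrkTk : Module.rank QH (T.obj (ModuleCat.of R (Fin k → R))) = ((k * (d * t) : ℕ) : Cardinal) := by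
    rw [rank_Fpow, hTdt]; push_cast; ring
  haveI : FiniteDimensional (ZMod q) (F.obj (ModuleCat.of R (Fin n → R))) :=
    Module.finite_of_rank_eq_nat hrkF
  haveI : FiniteDimensional QH (T.obj (ModuleCat.of R (Fin n → R))) :=
    Module.finite_of_rank_eq_nat hrkT
  -- rank of range of F.map f
  have hrangeF : Module.rank (ZMod q) (LinearMap.range (F.map f).hom) = (k : Cardinal) := by
    rw [hrange, ← hbspan, rank_span_set hbli, Cardinal.mk_fintype]
  -- range of T.map f contains an injective image of T(R^k)
  have hrangele : ((k * (d * t) : ℕ) : Cardinal) ≤ Module.rank QH (LinearMap.range (T.map f).hom) := by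
    rw [← hrkTk]
    have h1 : Module.rank QH (LinearMap.range (T.map (ι ≫ f)).hom)
        = Module.rank QH (T.obj (ModuleCat.of R (Fin k → R))) :=
      rank_range_of_injective _ hTinj
    rw [← h1]
    apply Submodule.rank_mono
    rw [T.map_comp, ModuleCat.hom_comp]
    exact LinearMap.range_comp_le_range _ _
  -- convert to finranks
  have hFnull := LinearMap.finrank_range_add_finrank_ker (F.map f).hom
  have hTnull := LinearMap.finrank_range_add_finrank_ker (T.map f).hom
  rw [Module.finrank_eq_of_rank_eq hrkF] at hFnull
  rw [Module.finrank_eq_of_rank_eq hrkT] at hTnull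
  have hrF : Module.finrank (ZMod q) (LinearMap.range (F.map f).hom) = k :=
    Module.finrank_eq_of_rank_eq hrangeF
  have hrT : k * (d * t) ≤ Module.finrank QH (LinearMap.range (T.map f).hom) := by
    have := hrangele
    rw [← Module.finrank_eq_rank QH (LinearMap.range (T.map f).hom)] at this
    exact_mod_cast this
  -- final arithmetic
  rw [← Module.finrank_eq_rank QH (LinearMap.ker (T.map f).hom),
    ← Module.finrank_eq_rank (ZMod q) (LinearMap.ker (F.map f).hom)]
  set kT := Module.finrank QH (LinearMap.ker (T.map f).hom)
  set kF := Module.finrank (ZMod q) (LinearMap.ker (F.map f).hom)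
  set rT := Module.finrank QH (LinearMap.range (T.map f).hom)
  have key : kT ≤ d * t * kF := by
    have hn : n = k + kF := by omega
    rw [hn, Nat.add_mul] at hTnull
    have hmul : kF * (d * t) = d * t * kF := by ring
    omega
  exact_mod_cast key
end

section
/- Let N ≤ M be modules over a ring R, let L be an R-module, and let b: M × M → L be a sesquilinear pairing. Let N^⊥ = {m ∈ M : b(n,m) = 0 for all n ∈ N} and N^⊥⊥ = (N^⊥)^⊥. If the restriction map Hom_R(N^⊥, L) → Hom_R(N, L) is injective, then N^⊥⊥ = N^⊥ (where N ≤ N^⊥ is assumed). -/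
variable {R : Type} [CommRing R] {M L : Type} [AddCommGroup M] [Module R M]
  [AddCommGroup L] [Module R L]

/-- The orthogonal complement `N^⊥ = {m ∈ M : b(n,m) = 0 for all n ∈ N}` of a submodule `N`
with respect to a bilinear pairing `b : M × M → L`. -/
def perpSubmodule (b : M →ₗ[R] M →ₗ[R] L) (N : Submodule R M) : Submodule R M where
  carrier := {m | ∀ n ∈ N, b n m = 0}
  add_mem' := by
    intro a c ha hc n hn
    simp [ha n hn, hc n hn]
  zero_mem' := by intro n hn; simp
  smul_mem' := by
    intro r a ha n hn
    simp [ha n hn]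

/-- Let `b : M × M → L` be a bilinear pairing, `N ≤ N^⊥` a submodule on which
`b` vanishes. If the restriction map `Hom_R(N^⊥, L) → Hom_R(N, L)` is injective (i.e. every
homomorphism `N^⊥ → L` vanishing on `N` is zero), then `N^⊥⊥ = N^⊥`. -/
theorem perp_perp_eq_perp (b : M →ₗ[R] M →ₗ[R] L) (N : Submodule R M)
    (hN : N ≤ perpSubmodule b N)
    (hinj : ∀ φ : perpSubmodule b N →ₗ[R] L,
      (∀ n : M, (hn : n ∈ N) → φ ⟨n, hN hn⟩ = 0) → φ = 0) :
    perpSubmodule b (perpSubmodule b N) = perpSubmodule b N := by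
  apply le_antisymm
  · intro m hm n hn
    exact hm n (hN hn)
  · intro m hm n hn
    have hφ : ((b.flip m).comp (perpSubmodule b N).subtype) = 0 := by
      apply hinj
      intro x hx
      simpa using hm x hx
    have := LinearMap.congr_fun hφ ⟨n, hn⟩
    simpa using this
end

section
/- For a nonzero finitely generated torsion module M over a Noetherian UFD R, the zeroth Alexander polynomial satisfies Δ₀(M) ≠ 0. -/
/-- The set of all `k × k` minors of a matrix `A`. (Selections with repeated rows or
columns contribute `0`, which does not affect gcd considerations.) -/
def minorsSet {R : Type} [CommRing R] {m n : ℕ} (k : ℕ) (A : Matrix (Fin m) (Fin n) R) :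
    Set R :=
  Set.range (fun p : (Fin k → Fin m) × (Fin k → Fin n) => (A.submatrix p.1 p.2).det)

/-- `d` is a greatest common divisor of the set `S`. -/
def IsGCDOf {R : Type} [CommRing R] (d : R) (S : Set R) : Prop :=
  (∀ a ∈ S, d ∣ a) ∧ ∀ c : R, (∀ a ∈ S, c ∣ a) → c ∣ d

/-- The matrix `A` is a presentation matrix for the module `M` via the surjection `π`:
there is an exact sequence `R^m → R^n → M → 0` where the first map is `v ↦ v * A`. -/
def IsPresentation {R : Type} [CommRing R] {m n : ℕ} {M : Type} [AddCommGroup M]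
    [Module R M] (A : Matrix (Fin m) (Fin n) R) (π : (Fin n → R) →ₗ[R] M) : Prop :=
  Function.Surjective π ∧ LinearMap.ker π = LinearMap.range A.vecMulLinear

/-- For a nonzero finitely generated torsion module `M` over a Noetherian
UFD `R`, the zeroth Alexander polynomial `Δ₀(M)` (the gcd of the maximal minors of a
presentation matrix of `M`) is nonzero. -/
theorem delta_zero_ne_zero {R : Type} [CommRing R] [IsDomain R] [IsNoetherianRing R]
    [UniqueFactorizationMonoid R]
    {M : Type} [AddCommGroup M] [Module R M] [Module.Finite R M] [Nontrivial M]
    (hT : Module.IsTorsion R M)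
    {m n : ℕ} (A : Matrix (Fin m) (Fin n) R) (π : (Fin n → R) →ₗ[R] M)
    (hA : IsPresentation A π)
    (d : R) (hd : IsGCDOf d (minorsSet n A)) :
    d ≠ 0 := by
  intro hd0
  subst hd0
  have hzero : ∀ a ∈ minorsSet n A, a = 0 := fun a ha => zero_dvd_iff.mp (hd.1 a ha)
  classical
  set K := FractionRing R
  set f : R →+* K := algebraMap R K with hfdef
  have hf : Function.Injective f := IsFractionRing.injective R K
  set B : Matrix (Fin m) (Fin n) K := A.map f with hB
  -- rows of B span everything
  have hspan : Submodule.span K (Set.range B) = ⊤ := by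
    rw [eq_top_iff, ← (Pi.basisFun K (Fin n)).span_eq, Submodule.span_le]
    rintro _ ⟨j, rfl⟩
    -- torsion gives r with r • π (single j 1) = 0
    obtain ⟨r, hr⟩ := @hT (π (Pi.single j 1))
    have hker : ((r : R) • (Pi.single j 1 : Fin n → R)) ∈ LinearMap.ker π := by
      rw [LinearMap.mem_ker, map_smul]
      exact hr
    rw [hA.2, LinearMap.mem_range] at hker
    obtain ⟨v, hv⟩ := hker
    have hv' : (Matrix.vecMul v A) = (r : R) • (Pi.single j 1 : Fin n → R) := by
      simpa using hv
    have hr0 : f (r : R) ≠ 0 := fun h => nonZeroDivisors.coe_ne_zero r (hf (by simpa using h))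
    have hmem : (Matrix.vecMul (f ∘ v) B) ∈ Submodule.span K (Set.range B) := by
      rw [show Set.range B = Set.range B.row from rfl, ← range_vecMulLinear]
      exact ⟨f ∘ v, rfl⟩
    have key : (Matrix.vecMul (f ∘ v) B) = f (r : R) • (Pi.basisFun K (Fin n) j) := by
      funext i
      rw [← RingHom.map_vecMul f A v i, hv']
      simp [Pi.basisFun_apply, Pi.single_apply, apply_ite f, mul_ite]
    have : (Pi.basisFun K (Fin n) j) = (f (r : R))⁻¹ • (Matrix.vecMul (f ∘ v) B) := by
      rw [key, smul_smul, inv_mul_cancel₀ hr0, one_smul]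
    rw [this]
    exact Submodule.smul_mem _ _ hmem
  -- extract a basis from the rows
  obtain ⟨b, hbsub, hbspan, hbli⟩ := exists_linearIndependent K (Set.range B)
  rw [hspan] at hbspan
  have hbfin : b.Finite := by
    have : FiniteDimensional K (Fin n → K) := inferInstance
    exact Set.Finite.ofFinset hbli.setFinite.toFinset (by simp)
  haveI : Fintype b := hbfin.fintype
  have basis : Module.Basis b K (Fin n → K) := Module.Basis.mk hbli (by rw [Subtype.range_coe]; rw [hbspan])
  have hcard : Fintype.card b = n := by
    have := Module.finrank_eq_card_basis basis
    simpa [Module.finrank_pi] using this.symm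
  obtain e : Fin n ≃ b := (Fintype.equivFinOfCardEq hcard).symm.trans (Equiv.refl _) |>.symm
    |>.symm
  -- choose row indices
  have hchoice : ∀ j : Fin n, ∃ i : Fin m, B i = ((e j : b) : Fin n → K) :=
    fun j => hbsub (e j).2
  choose p1 hp1 using hchoice
  set C : Matrix (Fin n) (Fin n) K := B.submatrix p1 id with hC
  have hCrows : (fun j => C j) = fun j => ((e j : b) : Fin n → K) := by
    funext j
    exact hp1 j
  have hli : LinearIndependent K (fun j => C j) := by
    rw [hCrows]
    exact hbli.comp (fun j => e j) (fun a b hab => e.injective hab)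
  have hunit : IsUnit C := Matrix.linearIndependent_rows_iff_isUnit.mp hli
  have hdet : C.det ≠ 0 := by
    have := hunit.map (Matrix.detMonoidHom (n := Fin n) (R := K))
    exact ((Matrix.isUnit_iff_isUnit_det C).mp hunit).ne_zero
  have hdetf : C.det = f ((A.submatrix p1 id).det) := by
    rw [hC, hB, Matrix.submatrix_map, f.map_det]
    rfl
  have hminor : (A.submatrix p1 id).det = 0 := hzero _ ⟨(p1, id), rfl⟩
  rw [hdetf, hminor, map_zero] at hdet
  exact hdet rfl
end
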